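/- Let A be a magmatic algebra over a field K with a reduced unital-infinitesimal coproduct δ. If x ∈ A is primitive and y, z ∈ A are arbitrary, then δ(as(x,y,z)) = (T ⊗ id)(δ z), where T : A → A is the K-linear map T(w) = as(x,y,w). -/
import Mathlib


open TensorProduct

/-- A K-linear map `δ : A → A ⊗ A` satisfies the reduced unital-infinitesimal
compatibility relation if
`δ(a·b) = (id ⊗ mulRight b)(δ a) + (mulLeft a ⊗ id)(δ b) + a ⊗ b` for all `a b`. -/
def IsUICoproduct (K : Type*) [Field K] (A : Type*) [NonUnitalNonAssocRing A]
    [Module K A] [SMulCommClass K A A] [IsScalarTower K A A]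
    (δ : A →ₗ[K] A ⊗[K] A) : Prop :=
  ∀ a b : A,
    δ (a * b) =
      TensorProduct.map LinearMap.id (LinearMap.mulRight K b) (δ a) +
      TensorProduct.map (LinearMap.mulLeft K a) LinearMap.id (δ b) +
      a ⊗ₜ[K] b

/-- If `x` is primitive then `δ(as(x,y,z)) = (T ⊗ id)(δ z)` where `T(w) = as(x,y,w)`. -/
theorem ui_coproduct_associator
    (K : Type*) [Field K] (A : Type*) [NonUnitalNonAssocRing A]
    [Module K A] [SMulCommClass K A A] [IsScalarTower K A A]
    (δ : A →ₗ[K] A ⊗[K] A) (hui : IsUICoproduct K A δ)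
    (x y z : A) (hx : δ x = 0)
    (T : A →ₗ[K] A) (hT : ∀ w : A, T w = (x * y) * w - x * (y * w)) :
    δ ((x * y) * z - x * (y * z)) = TensorProduct.map T LinearMap.id (δ z) := by
  have hT' : T = LinearMap.mulLeft K (x*y) - (LinearMap.mulLeft K x) ∘ₗ (LinearMap.mulLeft K y) := by
    ext w; simp [hT]
  have h1 : TensorProduct.map T (LinearMap.id : A →ₗ[K] A) (δ z)
      = TensorProduct.map (LinearMap.mulLeft K (x*y)) LinearMap.id (δ z)
        - TensorProduct.map (LinearMap.mulLeft K x) LinearMap.id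
            (TensorProduct.map (LinearMap.mulLeft K y) LinearMap.id (δ z)) := by
    rw [hT']
    induction δ z using TensorProduct.induction_on with
    | zero => simp
    | tmul a b => simp [sub_tmul]
    | add u v hu hv => simp_all [map_add]; abel
  have hcomm : ∀ u : A ⊗[K] A,
      TensorProduct.map LinearMap.id (LinearMap.mulRight K z)
        (TensorProduct.map (LinearMap.mulLeft K x) LinearMap.id u)
      = TensorProduct.map (LinearMap.mulLeft K x) LinearMap.id
        (TensorProduct.map LinearMap.id (LinearMap.mulRight K z) u) := by
    intro u
    induction u using TensorProduct.induction_on with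
    | zero => simp
    | tmul a b => simp
    | add u v hu hv => simp [map_add, hu, hv]
  rw [map_sub, hui, hui, hui, hui, hx, h1]
  simp only [map_zero, map_add, zero_add, hcomm, TensorProduct.map_tmul, LinearMap.mulLeft_apply, LinearMap.mulRight_apply, LinearMap.id_coe, id_eq]
  abel
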